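/- Let C ⊆ ℝ^m be a closed convex cone with C ≠ ℝ^m, let x ∈ C, and let y belong to the topological interior of C. Then ⟨f, y⟩ > 0 for every nonzero f ∈ C*, and inf{λ ≥ 0 : λ•y − x ∈ C} = sup{⟨f, x⟩/⟨f, y⟩ : f ∈ C*, f ≠ 0}; both sides are finite and nonnegative. (Dual characterization of the Birkhoff coefficient M(x,y) via supporting hyperplanes of the cone.) -/

import Mathlib

open scoped RealInnerProductSpace

/-- Birkhoff coefficient `M(x,y) = inf {λ ≥ 0 : λ•y - x ∈ C}`. -/
noncomputable def Mcoef {m : ℕ} (C : Set (EuclideanSpace ℝ (Fin m)))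
    (x y : EuclideanSpace ℝ (Fin m)) : ℝ :=
  sInf {l : ℝ | 0 ≤ l ∧ l • y - x ∈ C}

/-- Birkhoff coefficient `m(x,y) = sup {λ ≥ 0 : x - λ•y ∈ C}`. -/
noncomputable def mcoef {m : ℕ} (C : Set (EuclideanSpace ℝ (Fin m)))
    (x y : EuclideanSpace ℝ (Fin m)) : ℝ :=
  sSup {l : ℝ | 0 ≤ l ∧ x - l • y ∈ C}

/-- Birkhoff's version of the Hilbert metric `d_h(x,y) = (1/2)·log(M(x,y)/m(x,y))`. -/
noncomputable def dh {m : ℕ} (C : Set (EuclideanSpace ℝ (Fin m)))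
    (x y : EuclideanSpace ℝ (Fin m)) : ℝ :=
  (1 / 2) * Real.log (Mcoef C x y / mcoef C x y)

/-- The dual cone `C* = {f : ⟨f,z⟩ ≥ 0 for all z ∈ C}`. -/
def dualCone {m : ℕ} (C : Set (EuclideanSpace ℝ (Fin m))) :
    Set (EuclideanSpace ℝ (Fin m)) :=
  {f | ∀ z ∈ C, 0 ≤ ⟪f, z⟫}

/-- Dual characterization of the Birkhoff coefficient `M(x,y)` via supporting
hyperplanes: for a closed convex cone `C ≠ ℝ^m`, `x ∈ C` and `y` in the interior of
`C`, every nonzero `f ∈ C*` has `⟨f,y⟩ > 0`, and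
`inf{λ ≥ 0 : λ•y − x ∈ C} = sup{⟨f,x⟩/⟨f,y⟩ : f ∈ C*, f ≠ 0}`, both sides being
finite and nonnegative. -/
theorem stmt7 {m : ℕ} (C : Set (EuclideanSpace ℝ (Fin m)))
    (hadd : ∀ a ∈ C, ∀ b ∈ C, a + b ∈ C)
    (hsmul : ∀ c : ℝ, 0 < c → ∀ a ∈ C, c • a ∈ C)
    (hclosed : IsClosed C) (hne : C ≠ Set.univ)
    (x : EuclideanSpace ℝ (Fin m)) (hx : x ∈ C)
    (y : EuclideanSpace ℝ (Fin m)) (hy : y ∈ interior C) :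
    (∀ f ∈ dualCone C, f ≠ 0 → 0 < ⟪f, y⟫) ∧
    ({l : ℝ | 0 ≤ l ∧ l • y - x ∈ C}).Nonempty ∧
    ({r : ℝ | ∃ f ∈ dualCone C, f ≠ 0 ∧ r = ⟪f, x⟫ / ⟪f, y⟫}).Nonempty ∧
    BddAbove {r : ℝ | ∃ f ∈ dualCone C, f ≠ 0 ∧ r = ⟪f, x⟫ / ⟪f, y⟫} ∧
    Mcoef C x y = sSup {r : ℝ | ∃ f ∈ dualCone C, f ≠ 0 ∧ r = ⟪f, x⟫ / ⟪f, y⟫} ∧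
    0 ≤ Mcoef C x y := by
  let E := EuclideanSpace ℝ (Fin m)
  have hyC : y ∈ C := interior_subset hy
  set K : ConvexCone ℝ E :=
    { carrier := C
      smul_mem' := fun c hc {a} ha => hsmul c hc a ha
      add_mem' := fun {a} ha {b} hb => hadd a ha b hb } with hK
  have hKC : (K : Set E) = C := rfl
  have hKne : (K : Set E).Nonempty := ⟨y, hyC⟩
  have hKcl : IsClosed (K : Set E) := hclosed
  have h0C : (0 : E) ∈ C := by
    have ht : Filter.Tendsto (fun t : ℝ => t • y) (nhdsWithin 0 (Set.Ioi 0)) (nhds ((0:ℝ) • y)) :=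
      tendsto_nhdsWithin_of_tendsto_nhds ((continuous_id.smul continuous_const).tendsto 0)
    rw [zero_smul] at ht
    exact hclosed.mem_of_tendsto ht (eventually_nhdsWithin_of_forall fun t ht => hsmul t ht y hyC)
  let P : ProperCone ℝ E :=
    { carrier := C
      add_mem' := fun {a b} ha hb => hadd a ha b hb
      zero_mem' := h0C
      smul_mem' := fun c a ha => by
        obtain ⟨c, hc⟩ := c
        change (c • a) ∈ C
        rcases hc.eq_or_lt with h | h
        · rw [← h, zero_smul]; exact h0C
        · exact hsmul _ h a ha
      isClosed' := hclosed }
  have hbip : ∀ z : E, z ∈ C ↔ ∀ f ∈ dualCone C, 0 ≤ ⟪f, z⟫ := by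
    intro z
    constructor
    · intro hz f hf; exact hf z hz
    · intro h
      by_contra hz
      obtain ⟨g, hg1, hg2⟩ := P.hyperplane_separation' (x₀ := z) hz
      have := h g (fun w hw => by rw [real_inner_comm]; exact hg1 w hw)
      rw [real_inner_comm] at this
      linarith
  obtain ⟨ε, hε, hball⟩ := Metric.mem_nhds_iff.1 (mem_interior_iff_mem_nhds.1 hy)
  have hpos : ∀ f ∈ dualCone C, f ≠ 0 → 0 < ⟪f, y⟫ := by
    intro f hf hf0
    have hnf : (0 : ℝ) < ‖f‖ := norm_pos_iff.2 hf0
    set t : ℝ := ε / (2 * ‖f‖) with ht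
    have htpos : 0 < t := div_pos hε (by positivity)
    have hmem : y - t • f ∈ C := by
      apply hball
      simp only [Metric.mem_ball, dist_eq_norm, sub_sub_cancel_left, norm_neg, norm_smul,
        Real.norm_eq_abs, abs_of_pos htpos]
      have : t * ‖f‖ = ε / 2 := by rw [ht, div_mul_eq_mul_div, mul_div_mul_right _ _ hnf.ne']
      rw [this]; linarith
    have h1 := hf _ hmem
    rw [inner_sub_right, real_inner_smul_right, real_inner_self_eq_norm_sq] at h1
    nlinarith [mul_pos htpos (pow_pos hnf 2)]
  set S : Set ℝ := {l : ℝ | 0 ≤ l ∧ l • y - x ∈ C} with hSdef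
  set T : Set ℝ := {r : ℝ | ∃ f ∈ dualCone C, f ≠ 0 ∧ r = ⟪f, x⟫ / ⟪f, y⟫} with hTdef
  -- S nonempty
  have hSne : S.Nonempty := by
    set l : ℝ := ‖x‖ / ε + 1 with hl
    have hlpos : 0 < l := by positivity
    refine ⟨l, le_of_lt hlpos, ?_⟩
    have hmem : y - (1 / l) • x ∈ C := by
      apply hball
      simp only [Metric.mem_ball, dist_eq_norm, sub_sub_cancel_left, norm_neg, norm_smul,
        Real.norm_eq_abs]
      rw [abs_of_pos (by positivity : (0:ℝ) < 1 / l)]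
      rw [div_mul_eq_mul_div, one_mul, div_lt_iff₀ hlpos, hl]
      have h1 : ‖x‖ / ε * ε = ‖x‖ := div_mul_cancel₀ _ (ne_of_gt hε)
      nlinarith [norm_nonneg x]
    have := hsmul l hlpos _ hmem
    rwa [smul_sub, smul_smul, mul_one_div, div_self (ne_of_gt hlpos), one_smul] at this
  -- T nonempty
  have hTne : T.Nonempty := by
    obtain ⟨z, hz⟩ : ∃ z : E, z ∉ C := by
      by_contra h
      push_neg at h
      exact hne (Set.eq_univ_of_forall h)
    obtain ⟨g, hg1, hg2⟩ :=
      P.hyperplane_separation' (x₀ := z) hz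
    have hgdual : g ∈ dualCone C := fun w hw => by
      rw [real_inner_comm]; exact hg1 w hw
    have hg0 : g ≠ 0 := by
      rintro rfl
      simp at hg2
    exact ⟨_, g, hgdual, hg0, rfl⟩
  -- every element of T is ≤ any element of S; indeed S = upperBounds T
  have hST : ∀ l, l ∈ S ↔ l ∈ upperBounds T := by
    intro l
    constructor
    · rintro ⟨hl0, hlC⟩ r ⟨f, hf, hf0, rfl⟩
      have hfy := hpos f hf hf0
      have h1 := hf _ hlC
      rw [inner_sub_right, real_inner_smul_right] at h1
      rw [div_le_iff₀ hfy]
      linarith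
    · intro hub
      obtain ⟨r0, f0, hf0d, hf00, hr0⟩ := hTne
      have hr0nn : 0 ≤ r0 := by
        rw [hr0]
        exact div_nonneg (hf0d x hx) (le_of_lt (hpos f0 hf0d hf00))
      have hl0 : 0 ≤ l := le_trans hr0nn (hub ⟨f0, hf0d, hf00, hr0⟩)
      refine ⟨hl0, (hbip _).2 fun f hf => ?_⟩
      rcases eq_or_ne f 0 with rfl | hfne
      · simp
      · have hfy := hpos f hf hfne
        have hr : ⟪f, x⟫ / ⟪f, y⟫ ≤ l := hub ⟨f, hf, hfne, rfl⟩
        rw [div_le_iff₀ hfy] at hr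
        rw [inner_sub_right, real_inner_smul_right]
        linarith
  obtain ⟨l0, hl0⟩ := hSne
  have hTbdd : BddAbove T := ⟨l0, (hST l0).1 hl0⟩
  have hlub : IsLUB T (sSup T) := isLUB_csSup hTne hTbdd
  have hSeq : S = Set.Ici (sSup T) := by
    ext l
    rw [hST l, Set.mem_Ici]
    exact ⟨fun h => hlub.2 h, fun h => fun r hr => le_trans (hlub.1 hr) h⟩
  have hM : Mcoef C x y = sSup T := by
    rw [Mcoef, ← hSdef, hSeq, csInf_Ici]
  refine ⟨hpos, ⟨l0, hl0⟩, hTne, hTbdd, hM, ?_⟩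
  rw [hM]
  obtain ⟨r0, f0, hf0d, hf00, hr0⟩ := hTne
  refine le_csSup_of_le hTbdd ⟨f0, hf0d, hf00, hr0⟩ ?_
  rw [hr0]
  exact div_nonneg (hf0d x hx) (le_of_lt (hpos f0 hf0d hf00))
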